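/- arXiv:1707.00121 — 2 statements merged into one kernel-verified Lean document; each statement's English description precedes it below -/
import Mathlib

section
/- Let $y : [0,T] \to \mathbb{R}$ be a $C^2$ function satisfying $y''(t) + y'(t) \ge y(t) + c\, y(t)^2$ for all $t \in [0,T]$ in its interval of existence, where $c > 0$. Then there exists $M = M(c) > 0$ such that if $y(0) \ge M$ and $y'(0) \ge M$, then $y$ cannot be extended as a $C^2$ solution to all of $[0, \infty)$; i.e., $y$ blows up in finite time (there exists $t^* < \infty$ with $\lim_{t \to t^{*-}} y(t) = +\infty$). -/
open Set Filter Real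

private lemma stmt1_aux1 (A u : ℝ) (hu : u ≠ 0) :
    A * (-(2 * u ^ 1 * (-1)) / (u ^ 2) ^ 2) = 2 * A / u ^ 3 := by
  field_simp

private lemma stmt1_aux2 (A u : ℝ) (hu : u ≠ 0) :
    2 * A * (-(3 * u ^ 2 * (-1)) / (u ^ 3) ^ 2) = 6 * A / u ^ 4 := by
  field_simp; ring

private lemma stmt1_aux3 (c A u : ℝ) (hu : u ≠ 0) (h : c * A = 8) :
    c * (A / u ^ 2) ^ 2 = 8 * A / u ^ 4 := by
  field_simp; linear_combination A * h

/-- Blow-up for the differential inequality `y'' + y' ≥ y + c y²`: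
for large enough initial data no global `C²` solution on `[0,∞)` exists. -/
theorem stmt1 (c : ℝ) (hc : 0 < c) :
    ∃ M : ℝ, 0 < M ∧
      ∀ y : ℝ → ℝ, ContDiff ℝ 2 y →
        (∀ t : ℝ, 0 ≤ t →
          deriv (deriv y) t + deriv y t ≥ y t + c * y t ^ 2) →
        y 0 ≥ M → deriv y 0 ≥ M → False := by
  obtain ⟨A, hA0, hcA⟩ : ∃ A : ℝ, 0 < A ∧ c * A = 8 :=
    ⟨8 / c, by positivity, by field_simp⟩
  refine ⟨3 * A, by positivity, ?_⟩
  intro y hy hineq hy0 hy'0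
  -- basic differentiability facts
  have hdy := (contDiff_succ_iff_deriv (n := 1)).mp (by exact_mod_cast hy)
  have hy_diff : Differentiable ℝ y := hdy.1
  have hy'_cd : ContDiff ℝ 1 (deriv y) := hdy.2.2
  have hy'_diff : Differentiable ℝ (deriv y) := hy'_cd.differentiable one_ne_zero
  have hy_cont : Continuous y := hy_diff.continuous
  have hy'_cont : Continuous (deriv y) := hy'_diff.continuous
  -- the comparison functions
  set φ : ℝ → ℝ := fun t => A / (1 - t) ^ 2 with hφdef
  set ψ : ℝ → ℝ := fun t => 2 * A / (1 - t) ^ 3 with hψdef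
  set χ : ℝ → ℝ := fun t => 6 * A / (1 - t) ^ 4 with hχdef
  have hne : ∀ t : ℝ, t < 1 → (1 - t) ≠ 0 := fun t ht => by
    have : 0 < 1 - t := by linarith
    linarith
  have hone : ∀ t : ℝ, t < 1 → HasDerivAt (fun s : ℝ => 1 - s) (-1) t := fun t _ =>
    (hasDerivAt_id t).const_sub 1
  have hφ' : ∀ t : ℝ, t < 1 → HasDerivAt φ (ψ t) t := by
    intro t ht
    have hu : (1 - t) ≠ 0 := hne t ht
    have h1 : HasDerivAt (fun s : ℝ => (1 - s) ^ 2) (2 * (1 - t) ^ 1 * (-1)) t :=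
      (hone t ht).pow 2
    have h2 : HasDerivAt (fun s : ℝ => ((1 - s) ^ 2)⁻¹)
        (-(2 * (1 - t) ^ 1 * (-1)) / ((1 - t) ^ 2) ^ 2) t := h1.inv (pow_ne_zero 2 hu)
    have h3 := h2.const_mul A
    rw [stmt1_aux1 A (1 - t) hu] at h3
    rw [hφdef, hψdef]
    simp only
    simpa [div_eq_mul_inv] using h3
  have hψ' : ∀ t : ℝ, t < 1 → HasDerivAt ψ (χ t) t := by
    intro t ht
    have hu : (1 - t) ≠ 0 := hne t ht
    have h1 : HasDerivAt (fun s : ℝ => (1 - s) ^ 3) (3 * (1 - t) ^ 2 * (-1)) t :=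
      (hone t ht).pow 3
    have h2 : HasDerivAt (fun s : ℝ => ((1 - s) ^ 3)⁻¹)
        (-(3 * (1 - t) ^ 2 * (-1)) / ((1 - t) ^ 3) ^ 2) t := h1.inv (pow_ne_zero 3 hu)
    have h3 := h2.const_mul (2 * A)
    rw [stmt1_aux2 A (1 - t) hu] at h3
    rw [hψdef, hχdef]
    simp only
    simpa [div_eq_mul_inv, mul_assoc] using h3
  have hφcont : ∀ s : Set ℝ, s ⊆ Iio 1 → ContinuousOn φ s := by
    intro s hs
    exact ContinuousOn.div continuousOn_const
      (Continuous.continuousOn (by continuity))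
      (fun t ht => pow_ne_zero 2 (hne t (hs ht)))
  have hψcont : ∀ s : Set ℝ, s ⊆ Iio 1 → ContinuousOn ψ s := by
    intro s hs
    exact ContinuousOn.div continuousOn_const
      (Continuous.continuousOn (by continuity))
      (fun t ht => pow_ne_zero 3 (hne t (hs ht)))
  -- values at 0
  have hφ0 : φ 0 = A := by simp [hφdef]
  have hψ0 : ψ 0 = 2 * A := by norm_num [hψdef]
  -- positivity of φ
  have hφpos : ∀ t : ℝ, t < 1 → 0 < φ t := by
    intro t ht
    have h1 : 0 < 1 - t := by linarith
    exact div_pos hA0 (by positivity)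
  -- key differential-inequality estimate:
  -- if `y ≥ φ` at `s ∈ [0,1)` then `y'' + y' ≥ φ s + χ s + ψ s`
  have hkeyineq : ∀ s : ℝ, 0 ≤ s → s < 1 → φ s ≤ y s →
      deriv (deriv y) s + deriv y s ≥ φ s + χ s + ψ s := by
    intro s hs0 hs1 hφy
    have h1 : 0 < 1 - s := by linarith
    have hφnn : 0 ≤ φ s := (hφpos s hs1).le
    have hsq : c * φ s ^ 2 ≤ c * y s ^ 2 := by
      have := pow_le_pow_left₀ hφnn hφy 2
      nlinarith
    have hcφ : φ s + χ s + ψ s ≤ φ s + c * φ s ^ 2 := by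
      have hφsq : c * φ s ^ 2 = 8 * A / (1 - s) ^ 4 := by
        rw [hφdef]
        simp only
        exact stmt1_aux3 c A (1 - s) (hne s hs1) hcA
      rw [hφsq, hχdef, hψdef]
      simp only
      have h2 : 2 * A / (1 - s) ^ 3 ≤ 2 * A / (1 - s) ^ 4 := by
        apply div_le_div_of_nonneg_left (by positivity) (by positivity)
        calc (1 - s) ^ 4 = (1 - s) ^ 3 * (1 - s) := by ring
        _ ≤ (1 - s) ^ 3 * 1 :=
          mul_le_mul_of_nonneg_left (by linarith) (pow_pos h1 3).le
        _ = (1 - s) ^ 3 := by ring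
      have h3 : 6 * A / (1 - s) ^ 4 + 2 * A / (1 - s) ^ 4 = 8 * A / (1 - s) ^ 4 := by ring
      linarith
    have := hineq s hs0
    linarith [hsq, hcφ, hφy]
  -- Main claim: `deriv y - ψ ≥ 0` on `[0, 1)`.
  have key : ∀ t ∈ Ico (0:ℝ) 1, 0 ≤ deriv y t - ψ t := by
    by_contra hcon
    push_neg at hcon
    obtain ⟨t₁, ht₁, hneg⟩ := hcon
    obtain ⟨ht₁0, ht₁1⟩ := ht₁
    set S : Set ℝ := Icc 0 t₁ ∩ (fun t => deriv y t - ψ t) ⁻¹' Iic 0 with hSdef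
    have hScl : IsClosed S := by
      apply ContinuousOn.preimage_isClosed_of_isClosed _ isClosed_Icc isClosed_Iic
      exact hy'_cont.continuousOn.sub (hψcont _ (fun t ht => lt_of_le_of_lt ht.2 ht₁1))
    have hSne : S.Nonempty := ⟨t₁, ⟨⟨ht₁0, le_rfl⟩, hneg.le⟩⟩
    have hSbdd : BddBelow S := ⟨0, fun x hx => hx.1.1⟩
    set t₀ : ℝ := sInf S with ht₀def
    have ht₀S : t₀ ∈ S := hScl.csInf_mem hSne hSbdd
    have ht₀0 : 0 ≤ t₀ := ht₀S.1.1
    have ht₀t₁ : t₀ ≤ t₁ := ht₀S.1.2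
    have ht₀1 : t₀ < 1 := lt_of_le_of_lt ht₀t₁ ht₁1
    have ht₀neg : deriv y t₀ - ψ t₀ ≤ 0 := ht₀S.2
    -- positivity before t₀
    have hbefore : ∀ s : ℝ, 0 ≤ s → s < t₀ → 0 < deriv y s - ψ s := by
      intro s hs0 hst₀
      by_contra h
      push_neg at h
      have hsS : s ∈ S := ⟨⟨hs0, le_trans hst₀.le ht₀t₁⟩, h⟩
      exact absurd (csInf_le hSbdd hsS) (not_le.mpr hst₀)
    have h20 : 0 < deriv y 0 - ψ 0 := by rw [hψ0]; linarith
    have ht₀pos : 0 < t₀ := by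
      rcases lt_or_eq_of_le ht₀0 with h | h
      · exact h
      · exact absurd ht₀neg (by rw [← h]; linarith)
    -- `y - φ` is monotone on `[0, t₀]`, hence `y ≥ φ` there
    have hIsub : Icc (0:ℝ) t₀ ⊆ Iio 1 := fun s hs => lt_of_le_of_lt hs.2 ht₀1
    have hmono : MonotoneOn (fun s => y s - φ s) (Icc 0 t₀) := by
      apply monotoneOn_of_deriv_nonneg (convex_Icc 0 t₀)
      · exact hy_cont.continuousOn.sub (hφcont _ hIsub)
      · intro s hs
        rw [interior_Icc] at hs
        exact ((hy_diff s).sub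
          (hφ' s (lt_trans hs.2 ht₀1)).differentiableAt).differentiableWithinAt
      · intro s hs
        rw [interior_Icc] at hs
        have hd : deriv (fun s => y s - φ s) s = deriv y s - ψ s :=
          (((hy_diff s).hasDerivAt).sub (hφ' s (lt_trans hs.2 ht₀1))).deriv
        rw [hd]
        exact (hbefore s hs.1.le hs.2).le
    have hyφ : ∀ s ∈ Icc (0:ℝ) t₀, φ s ≤ y s := by
      intro s hs
      have h1 : y 0 - φ 0 ≤ y s - φ s := hmono ⟨le_rfl, ht₀0⟩ hs hs.1
      have h2 : 0 ≤ y 0 - φ 0 := by rw [hφ0]; linarith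
      linarith
    -- `exp * (deriv y - ψ)` is strictly monotone on `[0, t₀]`
    have hg : StrictMonoOn (fun s => Real.exp s * (deriv y s - ψ s)) (Icc 0 t₀) := by
      apply strictMonoOn_of_deriv_pos (convex_Icc 0 t₀)
      · exact (Real.continuous_exp.continuousOn).mul
          (hy'_cont.continuousOn.sub (hψcont _ hIsub))
      · intro s hs
        rw [interior_Icc] at hs
        have hs1 : s < 1 := lt_trans hs.2 ht₀1
        have hd2 : HasDerivAt (fun s => deriv y s - ψ s)
            (deriv (deriv y) s - χ s) s := ((hy'_diff s).hasDerivAt).sub (hψ' s hs1)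
        have hdg : HasDerivAt (fun s => Real.exp s * (deriv y s - ψ s))
            (Real.exp s * (deriv (deriv y) s + deriv y s - χ s - ψ s)) s := by
          have this : HasDerivAt (fun s => Real.exp s * (deriv y s - ψ s))
              (Real.exp s * (deriv y s - ψ s) + Real.exp s * (deriv (deriv y) s - χ s)) s :=
            (Real.hasDerivAt_exp s).mul hd2
          convert this using 1
          ring
        rw [hdg.deriv]
        have hkey := hkeyineq s hs.1.le hs1 (hyφ s ⟨hs.1.le, hs.2.le⟩)
        have hφp : 0 < φ s := hφpos s hs1
        apply mul_pos (Real.exp_pos s)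
        linarith
    have hglt := hg ⟨le_rfl, ht₀0⟩ ⟨ht₀0, le_rfl⟩ ht₀pos
    simp only [Real.exp_zero, one_mul] at hglt
    nlinarith [mul_nonneg (Real.exp_pos t₀).le (neg_nonneg.mpr ht₀neg)]
  -- From `key`, `y ≥ φ` on `[0,1)`
  have hyφall : ∀ t ∈ Ico (0:ℝ) 1, φ t ≤ y t := by
    intro t ht
    have hIsub : Icc (0:ℝ) t ⊆ Iio 1 := fun s hs => lt_of_le_of_lt hs.2 ht.2
    have hmono : MonotoneOn (fun s => y s - φ s) (Icc 0 t) := by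
      apply monotoneOn_of_deriv_nonneg (convex_Icc 0 t)
      · exact hy_cont.continuousOn.sub (hφcont _ hIsub)
      · intro s hs
        rw [interior_Icc] at hs
        exact ((hy_diff s).sub
          (hφ' s (lt_trans hs.2 ht.2)).differentiableAt).differentiableWithinAt
      · intro s hs
        rw [interior_Icc] at hs
        have hd : deriv (fun s => y s - φ s) s = deriv y s - ψ s :=
          (((hy_diff s).hasDerivAt).sub (hφ' s (lt_trans hs.2 ht.2))).deriv
        rw [hd]
        exact key s ⟨hs.1.le, lt_trans hs.2 ht.2⟩
    have h1 : y 0 - φ 0 ≤ y t - φ t := hmono ⟨le_rfl, ht.1⟩ ⟨ht.1, le_rfl⟩ ht.1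
    have h2 : 0 ≤ y 0 - φ 0 := by rw [hφ0]; linarith
    linarith
  -- Final contradiction: `y` tends to `y 1` at `1⁻` but dominates `φ → ∞`.
  have hφtop : Tendsto φ (nhdsWithin 1 (Iio 1)) atTop := by
    have h1 : Tendsto (fun t : ℝ => 1 - t) (nhdsWithin 1 (Iio 1)) (nhdsWithin 0 (Ioi 0)) := by
      apply tendsto_nhdsWithin_of_tendsto_nhds_of_eventually_within
      · have hc1 : Continuous (fun t : ℝ => 1 - t) := continuous_const.sub continuous_id
        have : Tendsto (fun t : ℝ => 1 - t) (nhds 1) (nhds 0) := by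
          simpa using hc1.tendsto (1:ℝ)
        exact this.mono_left nhdsWithin_le_nhds
      · filter_upwards [self_mem_nhdsWithin] with t ht
        simp only [mem_Iio] at ht
        simpa using sub_pos.mpr ht
    have h2 : Tendsto (fun t : ℝ => ((1 - t) ^ 2)⁻¹) (nhdsWithin 1 (Iio 1)) atTop := by
      have hinv : Tendsto (fun x : ℝ => x⁻¹) (nhdsWithin 0 (Ioi 0)) atTop :=
        tendsto_inv_nhdsGT_zero
      have hsq : Tendsto (fun x : ℝ => x ^ 2) atTop atTop :=
        tendsto_pow_atTop (by norm_num)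
      have : Tendsto (fun t : ℝ => ((1 - t)⁻¹) ^ 2) (nhdsWithin 1 (Iio 1)) atTop :=
        (hsq.comp hinv).comp h1
      simpa [inv_pow] using this
    have := h2.const_mul_atTop hA0
    simpa [hφdef, div_eq_mul_inv] using this
  have hyy1 : Tendsto y (nhdsWithin 1 (Iio 1)) (nhds (y 1)) :=
    (hy_cont.tendsto 1).mono_left nhdsWithin_le_nhds
  have hytop : Tendsto y (nhdsWithin 1 (Iio 1)) atTop := by
    apply tendsto_atTop_mono' _ _ hφtop
    filter_upwards [Ioo_mem_nhdsLT_of_mem (show (1:ℝ) ∈ Ioc 0 1 from ⟨one_pos, le_rfl⟩)] with t ht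
    exact hyφall t ⟨ht.1.le, ht.2⟩
  exact not_tendsto_atTop_of_tendsto_nhds hyy1 hytop
end

section
/- Let $u : [0,T] \times \mathbb{R} \to \mathbb{R}$ be a $C^2$ solution of the hyperbolic Burgers equation $\partial_t^2 u + \partial_t u + 2u\,\partial_x u = \partial_x^2 u$ on the backward light cone $K = \{(t,x) : 0 \le t \le R,\ |x| \le R - t\}$. Define $e(t) := \int_{-(R-t)}^{R-t} \left( (\partial_t u(t,x))^2 + (\partial_x u(t,x))^2 \right) dx$. Then $e'(t) \le 2 \|u(t,\cdot)\|_{L^\infty([-(R-t),R-t])}\, e(t)$ for $0 \le t < R$. In particular, if $u(0,\cdot) = \partial_t u(0,\cdot) = 0$ on $[-R, R]$, then $u \equiv 0$ on $K$. -/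
open MeasureTheory Set intervalIntegral



lemma hasDerivAt_uncurry_fst (f : ℝ × ℝ → ℝ) {t x : ℝ}
    (hf : DifferentiableAt ℝ f (t, x)) :
    HasDerivAt (fun s => f (s, x)) (fderiv ℝ f (t, x) (1, 0)) t := by
  have h : HasDerivAt (fun s : ℝ => (s, x)) ((1 : ℝ), (0 : ℝ)) t :=
    HasDerivAt.prodMk (hasDerivAt_id t) (hasDerivAt_const t x)
  exact hf.hasFDerivAt.comp_hasDerivAt t h

lemma hasDerivAt_uncurry_snd (f : ℝ × ℝ → ℝ) {t x : ℝ}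
    (hf : DifferentiableAt ℝ f (t, x)) :
    HasDerivAt (fun y => f (t, y)) (fderiv ℝ f (t, x) (0, 1)) x := by
  have h : HasDerivAt (fun y : ℝ => (t, y)) ((0 : ℝ), (1 : ℝ)) x :=
    HasDerivAt.prodMk (hasDerivAt_const x t) (hasDerivAt_id x)
  exact hf.hasFDerivAt.comp_hasDerivAt x h


lemma contDiff_clm_apply_vec {f : ℝ × ℝ → ℝ} (hf : ContDiff ℝ 2 f) (v : ℝ × ℝ) :
    ContDiff ℝ 1 (fun z => fderiv ℝ f z v) := by
  have hD : ContDiff ℝ 1 (fderiv ℝ f) := hf.fderiv_right (by norm_num)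
  exact hD.clm_apply contDiff_const

-- Clairaut in the form we need
lemma clairaut {f : ℝ × ℝ → ℝ} (hf : ContDiff ℝ 2 f) (z : ℝ × ℝ) (v w : ℝ × ℝ) :
    fderiv ℝ (fun z => fderiv ℝ f z v) z w = fderiv ℝ (fun z => fderiv ℝ f z w) z v := by
  have hD : ContDiff ℝ 1 (fderiv ℝ f) := hf.fderiv_right (by norm_num)
  have hDd : DifferentiableAt ℝ (fderiv ℝ f) z := (hD.differentiable (by norm_num)) z
  have h1 : ∀ c : ℝ × ℝ, HasFDerivAt (fun z => fderiv ℝ f z c)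
      ((fderiv ℝ (fderiv ℝ f) z).flip c) z := by
    intro c
    have := hDd.hasFDerivAt.clm_apply (hasFDerivAt_const c z)
    simpa using this
  have hsym : IsSymmSndFDerivAt ℝ f z := (hf.contDiffAt).isSymmSndFDerivAt (by norm_num)
  rw [(h1 v).fderiv, (h1 w).fderiv]
  simpa using hsym w v


lemma zero_of_integral_zero {h : ℝ → ℝ} (hc : Continuous h) (hnn : ∀ x, 0 ≤ h x)
    {a b : ℝ} (hz : ∫ x in Set.Icc a b, h x = 0) :
    ∀ x ∈ Set.Ioo a b, h x = 0 := by
  intro x₀ hx₀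
  by_contra hne
  have hpos : 0 < h x₀ := lt_of_le_of_ne (hnn x₀) (Ne.symm hne)
  have hopen : IsOpen ({x | h x₀ / 2 < h x} ∩ Set.Ioo a b) :=
    (isOpen_lt continuous_const hc).inter isOpen_Ioo
  have hx0mem : x₀ ∈ ({x | h x₀ / 2 < h x} ∩ Set.Ioo a b) :=
    ⟨by simp only [Set.mem_setOf_eq]; linarith, hx₀⟩
  obtain ⟨δ, hδpos, hball⟩ := Metric.isOpen_iff.1 hopen x₀ hx0mem
  set s := Set.Ioo (x₀ - δ) (x₀ + δ) ∩ Set.Ioo a b with hs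
  have hssub : s ⊆ {x | h x₀ / 2 < h x} ∩ Set.Ioo a b := by
    intro y hy
    exact hball (by simpa [Real.ball_eq_Ioo] using hy.1)
  have hsub : s ⊆ Set.Icc a b := fun y hy => Set.Ioo_subset_Icc_self hy.2
  have hmeas : MeasurableSet s := measurableSet_Ioo.inter measurableSet_Ioo
  have hsopen : IsOpen s := isOpen_Ioo.inter isOpen_Ioo
  have hnonempty : s.Nonempty := ⟨x₀, ⟨by constructor <;> linarith, hx₀⟩⟩
  have hvolpos : 0 < volume s := hsopen.measure_pos volume hnonempty
  have hvolne : volume s ≠ ⊤ := by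
    refine ne_top_of_le_ne_top ?_ (measure_mono (Set.inter_subset_left))
    simp [Real.volume_Ioo]
  have hint : IntegrableOn h (Set.Icc a b) := hc.integrableOn_Icc
  have h1 : ∫ x in s, h x ≤ ∫ x in Set.Icc a b, h x :=
    setIntegral_mono_set hint (Filter.Eventually.of_forall fun x => hnn x)
      (Filter.Eventually.of_forall hsub)
  have h2 : h x₀ / 2 * (volume s).toReal ≤ ∫ x in s, h x :=
    setIntegral_ge_of_const_le_real hmeas hvolne (fun x hx => le_of_lt (hssub hx).1)
      (hint.mono_set hsub)
  have h3 : 0 < h x₀ / 2 * (volume s).toReal := by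
    apply mul_pos (by linarith)
    exact ENNReal.toReal_pos hvolpos.ne' hvolne
  linarith


lemma param_deriv (g : ℝ × ℝ → ℝ) (hg : ContDiff ℝ 1 g) (R t₀ : ℝ) :
    HasDerivAt (fun t => ∫ y in (-1:ℝ)..1, g (t, (R - t) * y))
      (∫ y in (-1:ℝ)..1, fderiv ℝ g (t₀, (R - t₀) * y) (1, -y)) t₀ := by
  have hgc : Continuous g := hg.continuous
  have hD : Continuous (fderiv ℝ g) := (hg.fderiv_right (m := 0) (by norm_num)).continuous
  have hγ : Continuous (fun w : ℝ × ℝ => ((w.1, (R - w.1) * w.2) : ℝ × ℝ)) := by fun_prop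
  have hφ : Continuous (fun w : ℝ × ℝ =>
      fderiv ℝ g (w.1, (R - w.1) * w.2) ((1 : ℝ), -w.2)) := by
    apply Continuous.clm_apply (hD.comp hγ)
    fun_prop
  have hK : IsCompact ((Set.Icc (t₀ - 1) (t₀ + 1)) ×ˢ (Set.Icc (-1 : ℝ) 1)) :=
    isCompact_Icc.prod isCompact_Icc
  obtain ⟨C, hC⟩ := hK.exists_bound_of_continuousOn hφ.continuousOn
  have main := intervalIntegral.hasDerivAt_integral_of_dominated_loc_of_deriv_le
    (F := fun t y => g (t, (R - t) * y))
    (F' := fun t y => fderiv ℝ g (t, (R - t) * y) ((1 : ℝ), -y))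
    (bound := fun _ => C) (a := (-1 : ℝ)) (b := 1) (x₀ := t₀) (μ := volume)
    (Metric.ball_mem_nhds t₀ one_pos)
    (Filter.Eventually.of_forall fun t =>
      ((hgc.comp (by fun_prop)).aestronglyMeasurable))
    ((hgc.comp (by fun_prop)).intervalIntegrable _ _)
    ((hφ.comp (continuous_const.prodMk continuous_id)).aestronglyMeasurable)
    (Filter.Eventually.of_forall fun y hy t ht => by
      rw [Set.uIoc_of_le (by norm_num : (-1:ℝ) ≤ 1)] at hy
      have hmem : ((t, y) : ℝ × ℝ) ∈ (Set.Icc (t₀ - 1) (t₀ + 1)) ×ˢ (Set.Icc (-1 : ℝ) 1) := by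
        constructor
        · have := Metric.mem_ball.1 ht
          rw [Real.dist_eq] at this
          have := abs_lt.1 this
          constructor <;> simp <;> linarith [this.1, this.2]
        · exact ⟨le_of_lt hy.1, hy.2⟩
      exact hC _ hmem)
    (intervalIntegrable_const)
    (Filter.Eventually.of_forall fun y hy t ht => by
      have h1 : HasDerivAt (fun t : ℝ => (R - t) * y) (-y) t := by
        simpa using ((hasDerivAt_id t).const_sub R).mul_const y
      have hcurve : HasDerivAt (fun t : ℝ => ((t, (R - t) * y) : ℝ × ℝ)) (1, -y) t :=
        HasDerivAt.prodMk (hasDerivAt_id t) h1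
      exact (hg.differentiable (by norm_num) _).hasFDerivAt.comp_hasDerivAt t hcurve)
  exact main.2
set_option maxHeartbeats 1000000 in
/-- Finite propagation speed for the hyperbolic Burgers equation
`∂ₜ²u + ∂ₜu + 2u ∂ₓu = ∂ₓ²u` on the backward light cone: the cone energy
satisfies `e'(t) ≤ 2‖u(t)‖_{L^∞} e(t)`, and zero initial data on `[-R,R]`
forces `u ≡ 0` in the cone. -/
theorem stmt5 (R : ℝ) (hR : 0 < R) (u : ℝ → ℝ → ℝ)
    (hu : ContDiff ℝ 2 (Function.uncurry u))
    (hpde : ∀ t x : ℝ, 0 ≤ t → t ≤ R → |x| ≤ R - t →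
      deriv (deriv (fun s => u s x)) t + deriv (fun s => u s x) t +
          2 * u t x * deriv (fun y => u t y) x =
        deriv (deriv (fun y => u t y)) x)
    (e : ℝ → ℝ)
    (he : e = fun t => ∫ x in Set.Icc (-(R - t)) (R - t),
      ((deriv (fun s => u s x) t) ^ 2 + (deriv (fun y => u t y) x) ^ 2)) :
    (∀ t ∈ Set.Ico (0 : ℝ) R,
        deriv e t ≤ 2 * sSup ((fun x => |u t x|) '' Set.Icc (-(R - t)) (R - t)) * e t) ∧
      ((∀ x ∈ Set.Icc (-R) R, u 0 x = 0 ∧ deriv (fun s => u s x) 0 = 0) →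
        ∀ t x : ℝ, 0 ≤ t → t ≤ R → |x| ≤ R - t → u t x = 0) := by
  classical
  set F : ℝ × ℝ → ℝ := Function.uncurry u with hF_def
  have hF : ContDiff ℝ 2 F := hu
  have hFd : Differentiable ℝ F := hF.differentiable (by norm_num)
  set P : ℝ × ℝ → ℝ := fun z => fderiv ℝ F z (1, 0) with hP_def
  set Q : ℝ × ℝ → ℝ := fun z => fderiv ℝ F z (0, 1) with hQ_def
  have hP : ContDiff ℝ 1 P := contDiff_clm_apply_vec hF _
  have hQ : ContDiff ℝ 1 Q := contDiff_clm_apply_vec hF _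
  have hPd : Differentiable ℝ P := hP.differentiable (by norm_num)
  have hQd : Differentiable ℝ Q := hQ.differentiable (by norm_num)
  set g : ℝ × ℝ → ℝ := fun z => P z ^ 2 + Q z ^ 2 with hg_def
  have hg1 : ContDiff ℝ 1 g := (hP.pow 2).add (hQ.pow 2)
  have hgd : Differentiable ℝ g := hg1.differentiable (by norm_num)
  have hgc : Continuous g := hg1.continuous
  have hgnn : ∀ z, 0 ≤ g z := fun z => add_nonneg (sq_nonneg _) (sq_nonneg _)
  -- partial derivatives of u
  have hut : ∀ t x : ℝ, HasDerivAt (fun s => u s x) (P (t, x)) t := fun t x =>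
    hasDerivAt_uncurry_fst F (hFd _)
  have hux : ∀ t x : ℝ, HasDerivAt (fun y => u t y) (Q (t, x)) x := fun t x =>
    hasDerivAt_uncurry_snd F (hFd _)
  have hdut : ∀ t x : ℝ, deriv (fun s => u s x) t = P (t, x) := fun t x => (hut t x).deriv
  have hdux : ∀ t x : ℝ, deriv (fun y => u t y) x = Q (t, x) := fun t x => (hux t x).deriv
  -- second partial derivatives
  have hPt : ∀ t x : ℝ, HasDerivAt (fun s => P (s, x)) (fderiv ℝ P (t, x) (1, 0)) t :=
    fun t x => hasDerivAt_uncurry_fst P (hPd _)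
  have hPx : ∀ t x : ℝ, HasDerivAt (fun y => P (t, y)) (fderiv ℝ P (t, x) (0, 1)) x :=
    fun t x => hasDerivAt_uncurry_snd P (hPd _)
  have hQt : ∀ t x : ℝ, HasDerivAt (fun s => Q (s, x)) (fderiv ℝ Q (t, x) (1, 0)) t :=
    fun t x => hasDerivAt_uncurry_fst Q (hQd _)
  have hQx : ∀ t x : ℝ, HasDerivAt (fun y => Q (t, y)) (fderiv ℝ Q (t, x) (0, 1)) x :=
    fun t x => hasDerivAt_uncurry_snd Q (hQd _)
  -- Clairaut
  have hclair : ∀ z : ℝ × ℝ, fderiv ℝ Q z (1, 0) = fderiv ℝ P z (0, 1) := fun z =>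
    clairaut hF z (0, 1) (1, 0)
  -- PDE in terms of P, Q
  have hpde' : ∀ t x : ℝ, 0 ≤ t → t ≤ R → |x| ≤ R - t →
      fderiv ℝ P (t, x) (1, 0) = fderiv ℝ Q (t, x) (0, 1) - P (t, x) - 2 * u t x * Q (t, x) := by
    intro t x h0 h1 h2
    have h := hpde t x h0 h1 h2
    have e1 : deriv (deriv (fun s => u s x)) t = fderiv ℝ P (t, x) (1, 0) := by
      have : deriv (fun s => u s x) = fun s => P (s, x) := funext fun s => hdut s x
      rw [this]; exact (hPt t x).deriv
    have e2 : deriv (deriv (fun y => u t y)) x = fderiv ℝ Q (t, x) (0, 1) := by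
      have : deriv (fun y => u t y) = fun y => Q (t, y) := funext fun y => hdux t y
      rw [this]; exact (hQx t x).deriv
    rw [e1, hdut, hdux, e2] at h
    linarith
  -- derivatives of g
  have hgt : ∀ t x : ℝ, fderiv ℝ g (t, x) (1, 0) =
      2 * P (t, x) * fderiv ℝ P (t, x) (1, 0) + 2 * Q (t, x) * fderiv ℝ Q (t, x) (1, 0) := by
    intro t x
    have h1 : HasDerivAt (fun s => g (s, x))
        (2 * P (t, x) ^ 1 * fderiv ℝ P (t, x) (1, 0) +
          2 * Q (t, x) ^ 1 * fderiv ℝ Q (t, x) (1, 0)) t := by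
      have := ((hPt t x).pow 2).add ((hQt t x).pow 2)
      exact this.congr_deriv (by simp)
    have h2 : HasDerivAt (fun s => g (s, x)) (fderiv ℝ g (t, x) (1, 0)) t :=
      hasDerivAt_uncurry_fst g (hgd _)
    have := h2.unique h1
    rw [this]; ring
  have hgx : ∀ t x : ℝ, fderiv ℝ g (t, x) (0, 1) =
      2 * P (t, x) * fderiv ℝ P (t, x) (0, 1) + 2 * Q (t, x) * fderiv ℝ Q (t, x) (0, 1) := by
    intro t x
    have h1 : HasDerivAt (fun y => g (t, y))
        (2 * P (t, x) ^ 1 * fderiv ℝ P (t, x) (0, 1) +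
          2 * Q (t, x) ^ 1 * fderiv ℝ Q (t, x) (0, 1)) x := by
      have := ((hPx t x).pow 2).add ((hQx t x).pow 2)
      exact this.congr_deriv (by simp)
    have h2 : HasDerivAt (fun y => g (t, y)) (fderiv ℝ g (t, x) (0, 1)) x :=
      hasDerivAt_uncurry_snd g (hgd _)
    have := h2.unique h1
    rw [this]; ring
  -- e as integral of g over Icc
  have he' : ∀ t : ℝ, e t = ∫ x in Set.Icc (-(R - t)) (R - t), g (t, x) := by
    intro t
    rw [he]
    have hx : ∀ x : ℝ, deriv (fun s => u s x) t ^ 2 + deriv (fun y => u t y) x ^ 2 = g (t, x) :=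
      fun x => by rw [hdut, hdux]
    simp only [hx]
  -- e as interval integral for t ≤ R
  have he'' : ∀ t : ℝ, t ≤ R → e t = ∫ x in (-(R - t))..(R - t), g (t, x) := by
    intro t ht
    rw [he', intervalIntegral.integral_of_le (by linarith), integral_Icc_eq_integral_Ioc]
  -- substitution to fixed domain
  have hsub : ∀ t : ℝ, t ≤ R →
      e t = (R - t) * ∫ y in (-1:ℝ)..1, g (t, (R - t) * y) := by
    intro t ht
    rw [he'' t ht]
    have := intervalIntegral.smul_integral_comp_mul_left (fun x => g (t, x)) (R - t)
      (a := (-1:ℝ)) (b := 1)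
    rw [smul_eq_mul, show (R - t) * (-1 : ℝ) = -(R - t) by ring, mul_one] at this
    rw [← this]
  -- continuity facts
  have hDg : Continuous (fderiv ℝ g) := (hg1.fderiv_right (m := 0) (by norm_num)).continuous
  have hDP : Continuous (fderiv ℝ P) := (hP.fderiv_right (m := 0) (by norm_num)).continuous
  have hDQ : Continuous (fderiv ℝ Q) := (hQ.fderiv_right (m := 0) (by norm_num)).continuous
  have huc : Continuous (Function.uncurry u) := hu.continuous
  -- the key derivative estimate
  have key : ∀ t₀ ∈ Set.Ico (0:ℝ) R,
      HasDerivAt e (deriv e t₀) t₀ ∧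
      deriv e t₀ ≤ 2 * sSup ((fun x => |u t₀ x|) '' Set.Icc (-(R - t₀)) (R - t₀)) * e t₀ := by
    rintro t₀ ⟨ht0, htR⟩
    have hb : 0 < R - t₀ := by linarith
    -- slice continuity at t₀
    have hslice : Continuous (fun x : ℝ => ((t₀, x) : ℝ × ℝ)) := by fun_prop
    have hPsl : Continuous fun x : ℝ => P (t₀, x) := hP.continuous.comp hslice
    have hQsl : Continuous fun x : ℝ => Q (t₀, x) := hQ.continuous.comp hslice
    have hgsl : Continuous fun x : ℝ => g (t₀, x) := hgc.comp hslice
    have husl : Continuous fun x : ℝ => u t₀ x := huc.comp hslice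
    have hGt_cont : Continuous fun x : ℝ => fderiv ℝ g (t₀, x) ((1:ℝ), (0:ℝ)) :=
      (hDg.comp hslice).clm_apply continuous_const
    have hGx_cont : Continuous fun x : ℝ => fderiv ℝ g (t₀, x) ((0:ℝ), (1:ℝ)) :=
      (hDg.comp hslice).clm_apply continuous_const
    have hPx_cont : Continuous fun x : ℝ => fderiv ℝ P (t₀, x) ((0:ℝ), (1:ℝ)) :=
      (hDP.comp hslice).clm_apply continuous_const
    have hQx_cont : Continuous fun x : ℝ => fderiv ℝ Q (t₀, x) ((0:ℝ), (1:ℝ)) :=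
      (hDQ.comp hslice).clm_apply continuous_const
    -- derivative of e via the substituted representation
    have hparam := param_deriv g hg1 R t₀
    have hRt : HasDerivAt (fun t : ℝ => R - t) (-1) t₀ := by
      simpa using (hasDerivAt_id t₀).const_sub R
    have hmul := hRt.mul hparam
    have hev : e =ᶠ[nhds t₀] fun t => (R - t) * ∫ y in (-1:ℝ)..1, g (t, (R - t) * y) := by
      filter_upwards [Iio_mem_nhds htR] with t ht
      exact hsub t (le_of_lt ht)
    have hDe : HasDerivAt e
        ((-1) * (∫ y in (-1:ℝ)..1, g (t₀, (R - t₀) * y)) +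
          (R - t₀) * ∫ y in (-1:ℝ)..1, fderiv ℝ g (t₀, (R - t₀) * y) (1, -y)) t₀ :=
      hmul.congr_of_eventuallyEq hev
    -- b * I = e t₀
    have hbI : (R - t₀) * ∫ y in (-1:ℝ)..1, g (t₀, (R - t₀) * y) = e t₀ :=
      (hsub t₀ (le_of_lt htR)).symm
    -- b * I' in terms of x-integral
    have hbI' : (R - t₀) * ∫ y in (-1:ℝ)..1, fderiv ℝ g (t₀, (R - t₀) * y) (1, -y)
        = ∫ x in (-(R - t₀))..(R - t₀), fderiv ℝ g (t₀, x) (1, -(x / (R - t₀))) := by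
      have hcomp := intervalIntegral.smul_integral_comp_mul_left
        (fun x => fderiv ℝ g (t₀, x) (1, -(x / (R - t₀)))) (R - t₀) (a := (-1:ℝ)) (b := 1)
      rw [smul_eq_mul, show (R - t₀) * (-1:ℝ) = -(R - t₀) by ring, mul_one] at hcomp
      rw [← hcomp]
      congr 1
      refine intervalIntegral.integral_congr fun y hy => ?_
      rw [mul_div_cancel_left₀ y hb.ne']
    -- linearity of fderiv application
    have hlin : ∀ (x c : ℝ), fderiv ℝ g (t₀, x) ((1:ℝ), -c)
        = fderiv ℝ g (t₀, x) (1, 0) - c * fderiv ℝ g (t₀, x) (0, 1) := by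
      intro x c
      have hvec : ((1:ℝ), -c) = ((1:ℝ), (0:ℝ)) + (-c) • ((0:ℝ), (1:ℝ)) := by
        simp [Prod.ext_iff]
      rw [hvec, map_add, ContinuousLinearMap.map_smul, smul_eq_mul]
      ring
    -- split the integral
    have hsplit : ∫ x in (-(R - t₀))..(R - t₀), fderiv ℝ g (t₀, x) (1, -(x / (R - t₀)))
        = (∫ x in (-(R - t₀))..(R - t₀), fderiv ℝ g (t₀, x) (1, 0))
          - ∫ x in (-(R - t₀))..(R - t₀), (x / (R - t₀)) * fderiv ℝ g (t₀, x) (0, 1) := by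
      rw [← intervalIntegral.integral_sub (f := fun x => fderiv ℝ g (t₀, x) (1, 0))
        (g := fun x => (x / (R - t₀)) * fderiv ℝ g (t₀, x) (0, 1)) (hGt_cont.intervalIntegrable _ _)
        ((((continuous_id'.div_const (R - t₀)).mul hGx_cont :
          Continuous fun x : ℝ => (x / (R - t₀)) * fderiv ℝ g (t₀, x) (0, 1))).intervalIntegrable _ _)]
      refine intervalIntegral.integral_congr fun x hx => ?_
      exact hlin x (x / (R - t₀))
    -- integration by parts
    have hparts : ∫ x in (-(R - t₀))..(R - t₀), (x / (R - t₀)) * fderiv ℝ g (t₀, x) (0, 1)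
        = g (t₀, R - t₀) + g (t₀, -(R - t₀)) - (1 / (R - t₀)) * e t₀ := by
      have h := intervalIntegral.integral_mul_deriv_eq_deriv_mul
        (u := fun x => x / (R - t₀)) (u' := fun _ => 1 / (R - t₀))
        (v := fun x => g (t₀, x)) (v' := fun x => fderiv ℝ g (t₀, x) (0, 1))
        (a := -(R - t₀)) (b := R - t₀)
        (fun x _ => by simpa [one_div] using (hasDerivAt_id x).div_const (R - t₀))
        (fun x _ => hasDerivAt_uncurry_snd g (hgd _))
        intervalIntegrable_const
        (hGx_cont.intervalIntegrable _ _)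
      rw [h, div_self hb.ne', show -(R - t₀) / (R - t₀) = -1 by field_simp]
      have h2 : ∫ x in (-(R - t₀))..(R - t₀), (1 / (R - t₀)) * g (t₀, x)
          = (1 / (R - t₀)) * ∫ x in (-(R - t₀))..(R - t₀), g (t₀, x) :=
        intervalIntegral.integral_const_mul _ _
      rw [h2, ← he'' t₀ (le_of_lt htR)]
      ring
    -- rewrite ∂ₜ g using the PDE and Clairaut
    have hGtEq : ∀ x : ℝ, |x| ≤ R - t₀ → fderiv ℝ g (t₀, x) ((1:ℝ), (0:ℝ))
        = (2 * fderiv ℝ P (t₀, x) (0, 1) * Q (t₀, x)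
            + 2 * P (t₀, x) * fderiv ℝ Q (t₀, x) (0, 1))
          + (-2 * P (t₀, x) ^ 2 - 4 * u t₀ x * P (t₀, x) * Q (t₀, x)) := by
      intro x hx
      rw [hgt, hpde' t₀ x ht0 (le_of_lt htR) hx, hclair]
      ring
    -- FTC for the exact-derivative part
    have hH : ∀ x : ℝ, HasDerivAt (fun y => 2 * P (t₀, y) * Q (t₀, y))
        (2 * fderiv ℝ P (t₀, x) (0, 1) * Q (t₀, x)
          + 2 * P (t₀, x) * fderiv ℝ Q (t₀, x) (0, 1)) x := by
      intro x
      exact ((hPx t₀ x).const_mul 2).mul (hQx t₀ x)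
    have hFTC : ∫ x in (-(R - t₀))..(R - t₀),
        (2 * fderiv ℝ P (t₀, x) (0, 1) * Q (t₀, x)
          + 2 * P (t₀, x) * fderiv ℝ Q (t₀, x) (0, 1))
        = 2 * P (t₀, R - t₀) * Q (t₀, R - t₀)
          - 2 * P (t₀, -(R - t₀)) * Q (t₀, -(R - t₀)) := by
      apply intervalIntegral.integral_eq_sub_of_hasDerivAt (fun x _ => hH x)
      exact (((continuous_const.mul hPx_cont).mul hQsl).add
        ((continuous_const.mul hPsl).mul hQx_cont)).intervalIntegrable _ _
    -- split ∫ ∂ₜ g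
    have hGt_int : ∫ x in (-(R - t₀))..(R - t₀), fderiv ℝ g (t₀, x) ((1:ℝ), (0:ℝ))
        = (2 * P (t₀, R - t₀) * Q (t₀, R - t₀)
            - 2 * P (t₀, -(R - t₀)) * Q (t₀, -(R - t₀)))
          + ∫ x in (-(R - t₀))..(R - t₀),
              (-2 * P (t₀, x) ^ 2 - 4 * u t₀ x * P (t₀, x) * Q (t₀, x)) := by
      have hcongr : ∫ x in (-(R - t₀))..(R - t₀), fderiv ℝ g (t₀, x) ((1:ℝ), (0:ℝ))
          = ∫ x in (-(R - t₀))..(R - t₀),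
              ((2 * fderiv ℝ P (t₀, x) (0, 1) * Q (t₀, x)
                + 2 * P (t₀, x) * fderiv ℝ Q (t₀, x) (0, 1))
              + (-2 * P (t₀, x) ^ 2 - 4 * u t₀ x * P (t₀, x) * Q (t₀, x))) := by
        apply intervalIntegral.integral_congr
        intro x hx
        rw [Set.uIcc_of_le (by linarith : -(R - t₀) ≤ R - t₀)] at hx
        exact hGtEq x (abs_le.2 ⟨hx.1, hx.2⟩)
      rw [hcongr, intervalIntegral.integral_add
        (f := fun x => 2 * fderiv ℝ P (t₀, x) (0, 1) * Q (t₀, x)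
          + 2 * P (t₀, x) * fderiv ℝ Q (t₀, x) (0, 1))
        (g := fun x => -2 * P (t₀, x) ^ 2 - 4 * u t₀ x * P (t₀, x) * Q (t₀, x))
        ((((continuous_const.mul hPx_cont).mul hQsl).add
          ((continuous_const.mul hPsl).mul hQx_cont)).intervalIntegrable _ _)
        (((continuous_const.mul (hPsl.pow 2)).sub
          ((((continuous_const.mul husl).mul hPsl).mul hQsl))).intervalIntegrable _ _),
        hFTC]
    -- the supremum bound
    have hIccne : (Set.Icc (-(R - t₀)) (R - t₀)).Nonempty := ⟨0, by constructor <;> linarith⟩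
    have hbdd : BddAbove ((fun x => |u t₀ x|) '' Set.Icc (-(R - t₀)) (R - t₀)) :=
      (isCompact_Icc.image_of_continuousOn (husl.abs.continuousOn)).bddAbove
    set M := sSup ((fun x => |u t₀ x|) '' Set.Icc (-(R - t₀)) (R - t₀)) with hM_def
    have hM : ∀ x ∈ Set.Icc (-(R - t₀)) (R - t₀), |u t₀ x| ≤ M := fun x hx =>
      le_csSup hbdd ⟨x, hx, rfl⟩
    have hM0 : 0 ≤ M := le_trans (abs_nonneg _) (hM 0 ⟨by linarith, by linarith⟩)
    -- pointwise bound for the remainder integrand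
    have hptwise : ∀ x ∈ Set.Icc (-(R - t₀)) (R - t₀),
        -2 * P (t₀, x) ^ 2 - 4 * u t₀ x * P (t₀, x) * Q (t₀, x)
          ≤ 2 * M * g (t₀, x) := by
      intro x hx
      have h1 : |u t₀ x| ≤ M := hM x hx
      have h2 : -(u t₀ x * (P (t₀, x) * Q (t₀, x))) ≤ |u t₀ x| * |P (t₀, x) * Q (t₀, x)| := by
        calc -(u t₀ x * (P (t₀, x) * Q (t₀, x))) ≤ |u t₀ x * (P (t₀, x) * Q (t₀, x))| :=
              neg_le_abs _
          _ = |u t₀ x| * |P (t₀, x) * Q (t₀, x)| := abs_mul _ _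
      have h3 : 2 * |P (t₀, x) * Q (t₀, x)| ≤ P (t₀, x) ^ 2 + Q (t₀, x) ^ 2 := by
        rw [abs_mul]
        nlinarith [sq_nonneg (|P (t₀, x)| - |Q (t₀, x)|), sq_abs (P (t₀, x)),
          sq_abs (Q (t₀, x)), abs_nonneg (P (t₀, x)), abs_nonneg (Q (t₀, x))]
      have hgval : g (t₀, x) = P (t₀, x) ^ 2 + Q (t₀, x) ^ 2 := rfl
      rw [hgval]
      nlinarith [sq_nonneg (P (t₀, x)), abs_nonneg (P (t₀, x) * Q (t₀, x)),
        mul_le_mul_of_nonneg_left h1 (abs_nonneg (P (t₀, x) * Q (t₀, x)))]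
    have hrem : ∫ x in (-(R - t₀))..(R - t₀),
        (-2 * P (t₀, x) ^ 2 - 4 * u t₀ x * P (t₀, x) * Q (t₀, x))
        ≤ 2 * M * e t₀ := by
      have hmono := intervalIntegral.integral_mono_on (μ := volume)
        (by linarith : -(R - t₀) ≤ R - t₀)
        (((continuous_const.mul (hPsl.pow 2)).sub
          ((((continuous_const.mul husl).mul hPsl).mul hQsl))).intervalIntegrable _ _)
        ((continuous_const.mul hgsl).intervalIntegrable _ _)
        hptwise
      calc ∫ x in (-(R - t₀))..(R - t₀),
            (-2 * P (t₀, x) ^ 2 - 4 * u t₀ x * P (t₀, x) * Q (t₀, x))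
          ≤ ∫ x in (-(R - t₀))..(R - t₀), 2 * M * g (t₀, x) := hmono
        _ = 2 * M * ∫ x in (-(R - t₀))..(R - t₀), g (t₀, x) :=
            intervalIntegral.integral_const_mul _ _
        _ = 2 * M * e t₀ := by rw [← he'' t₀ (le_of_lt htR)]
    -- assemble
    have hderiv_eq : deriv e t₀
        = (-1) * (∫ y in (-1:ℝ)..1, g (t₀, (R - t₀) * y)) +
          (R - t₀) * ∫ y in (-1:ℝ)..1, fderiv ℝ g (t₀, (R - t₀) * y) (1, -y) := hDe.deriv
    refine ⟨by rw [hderiv_eq]; exact hDe, ?_⟩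
    rw [hderiv_eq]
    have hgb : g (t₀, R - t₀) = P (t₀, R - t₀) ^ 2 + Q (t₀, R - t₀) ^ 2 := rfl
    have hga : g (t₀, -(R - t₀)) = P (t₀, -(R - t₀)) ^ 2 + Q (t₀, -(R - t₀)) ^ 2 := rfl
    clear hev hmul hDe hparam
    have hI : (∫ y in (-1:ℝ)..1, g (t₀, (R - t₀) * y)) = e t₀ / (R - t₀) := by
      field_simp
      linarith [hbI]
    rw [hI, hbI', hsplit, hparts, hGt_int, hgb, hga]
    have hsq1 : 2 * P (t₀, R - t₀) * Q (t₀, R - t₀)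
        ≤ P (t₀, R - t₀) ^ 2 + Q (t₀, R - t₀) ^ 2 := by
      nlinarith [sq_nonneg (P (t₀, R - t₀) - Q (t₀, R - t₀))]
    have hsq2 : -(2 * P (t₀, -(R - t₀)) * Q (t₀, -(R - t₀)))
        ≤ P (t₀, -(R - t₀)) ^ 2 + Q (t₀, -(R - t₀)) ^ 2 := by
      nlinarith [sq_nonneg (P (t₀, -(R - t₀)) + Q (t₀, -(R - t₀)))]
    have hfield : (-1) * (e t₀ / (R - t₀)) + (1 / (R - t₀)) * e t₀ = 0 := by
      field_simp; ring
    linarith [hrem, hsq1, hsq2, hfield]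
  refine ⟨fun t ht => (key t ht).2, ?_⟩
  intro h0 t x ht0 htR hx
  -- global bound on |u| on the rectangle
  obtain ⟨C, hC⟩ := (isCompact_Icc.prod isCompact_Icc :
      IsCompact (Set.Icc (0:ℝ) R ×ˢ Set.Icc (-R) R)).exists_bound_of_continuousOn
    huc.continuousOn
  have hbound : ∀ t₀ ∈ Set.Ico (0:ℝ) R,
      sSup ((fun x => |u t₀ x|) '' Set.Icc (-(R - t₀)) (R - t₀)) ≤ C := by
    rintro t₀ ⟨h0', hR'⟩
    refine csSup_le ⟨|u t₀ 0|, ⟨0, ⟨by linarith, by linarith⟩, rfl⟩⟩ ?_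
    rintro a ⟨x', hx', rfl⟩
    have hmem : ((t₀, x') : ℝ × ℝ) ∈ Set.Icc (0:ℝ) R ×ˢ Set.Icc (-R) R := by
      refine ⟨⟨h0', hR'.le⟩, ⟨?_, ?_⟩⟩ <;> [linarith [hx'.1]; linarith [hx'.2]]
    have := hC _ hmem
    rw [Real.norm_eq_abs] at this
    exact this
  -- nonnegativity of e
  have hepos : ∀ s : ℝ, 0 ≤ e s := by
    intro s
    rw [he']
    exact setIntegral_nonneg measurableSet_Icc fun x _ => hgnn _
  -- e 0 = 0
  have he0 : e 0 = 0 := by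
    rw [he' 0, sub_zero, integral_Icc_eq_integral_Ioo]
    rw [setIntegral_congr_fun measurableSet_Ioo (g := fun _ => (0:ℝ)) ?_, MeasureTheory.integral_zero]
    intro x' hx'
    have hP0 : P (0, x') = 0 := by
      rw [← hdut 0 x']
      exact (h0 x' (Set.Ioo_subset_Icc_self hx')).2
    have hQ0 : Q (0, x') = 0 := by
      rw [← hdux 0 x']
      have hev0 : (fun y => u 0 y) =ᶠ[nhds x'] fun _ => (0:ℝ) := by
        filter_upwards [isOpen_Ioo.mem_nhds hx'] with y hy
        exact (h0 y (Set.Ioo_subset_Icc_self hy)).1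
      rw [hev0.deriv_eq, deriv_const]
    show g (0, x') = 0
    have : g (0, x') = P (0, x') ^ 2 + Q (0, x') ^ 2 := rfl
    rw [this, hP0, hQ0]
    ring
  -- Gronwall: e vanishes on [0, R)
  have heC : ∀ t₀ ∈ Set.Ico (0:ℝ) R, deriv e t₀ ≤ 2 * C * e t₀ := by
    intro t₀ ht₀
    have h1 := (key t₀ ht₀).2
    have h2 := hbound t₀ ht₀
    have h3 := hepos t₀
    nlinarith
  have hfderiv : ∀ t₀ ∈ Set.Ico (0:ℝ) R, HasDerivAt
      (fun s => e s * Real.exp (-(2*C) * s))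
      ((deriv e t₀ - 2*C*e t₀) * Real.exp (-(2*C) * t₀)) t₀ := by
    intro t₀ ht₀
    have h1 := (key t₀ ht₀).1
    have h3 : HasDerivAt (fun s : ℝ => -(2*C) * s) (-(2*C)) t₀ := by
      simpa using (hasDerivAt_id t₀).const_mul (-(2*C))
    have h2 := h3.exp
    have h4 := h1.mul h2
    exact h4.congr_deriv (by ring)
  have hez : ∀ r ∈ Set.Ico (0:ℝ) R, e r = 0 := by
    intro r hr
    rcases eq_or_lt_of_le hr.1 with h|h
    · rw [← h]; exact he0
    · have hmono : AntitoneOn (fun s => e s * Real.exp (-(2*C) * s)) (Set.Icc 0 r) := by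
        apply antitoneOn_of_deriv_nonpos (convex_Icc 0 r)
        · intro s hs
          exact ((hfderiv s ⟨hs.1, lt_of_le_of_lt hs.2 hr.2⟩).continuousAt).continuousWithinAt
        · intro s hs
          rw [interior_Icc] at hs
          exact ((hfderiv s ⟨hs.1.le, lt_trans hs.2 hr.2⟩).differentiableAt).differentiableWithinAt
        · intro s hs
          rw [interior_Icc] at hs
          have hs' : s ∈ Set.Ico (0:ℝ) R := ⟨hs.1.le, lt_trans hs.2 hr.2⟩
          rw [(hfderiv s hs').deriv]
          have h5 := heC s hs'
          have hexp : 0 < Real.exp (-(2*C) * s) := Real.exp_pos _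
          nlinarith
      have hfr := hmono (Set.left_mem_Icc.2 h.le) (Set.right_mem_Icc.2 h.le) h.le
      have hexp : 0 < Real.exp (-(2*C) * r) := Real.exp_pos _
      have h6 := hepos r
      simp only [he0, zero_mul] at hfr
      nlinarith
  -- P vanishes in the open cone
  have hPzero : ∀ t₀ ∈ Set.Ico (0:ℝ) R, ∀ x₀ ∈ Set.Ioo (-(R - t₀)) (R - t₀),
      P (t₀, x₀) = 0 := by
    intro t₀ ht₀ x₀ hx₀
    have hze : (∫ x' in Set.Icc (-(R - t₀)) (R - t₀), g (t₀, x')) = 0 := by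
      rw [← he']; exact hez t₀ ht₀
    have hg0 := zero_of_integral_zero
      (hgc.comp (by fun_prop : Continuous fun x' : ℝ => ((t₀, x') : ℝ × ℝ)))
      (fun x' => hgnn _) hze x₀ hx₀
    have hg0' : P (t₀, x₀) ^ 2 + Q (t₀, x₀) ^ 2 = 0 := hg0
    have hp2 : P (t₀, x₀) ^ 2 = 0 :=
      le_antisymm (by nlinarith [sq_nonneg (Q (t₀, x₀))]) (sq_nonneg _)
    exact (pow_eq_zero_iff (by norm_num : (2:ℕ) ≠ 0)).1 hp2
  -- u vanishes in the open cone
  have hinner : ∀ t₀ x₀ : ℝ, 0 ≤ t₀ → t₀ < R → |x₀| < R - t₀ → u t₀ x₀ = 0 := by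
    intro t₀ x₀ h0' hR' hx'
    have habs := abs_lt.1 hx'
    have hcont : ContinuousOn (fun s => u s x₀) (Set.Icc 0 t₀) :=
      fun s _ => ((hut s x₀).continuousAt).continuousWithinAt
    have hderiv0 : ∀ s ∈ Set.Ico 0 t₀, HasDerivWithinAt (fun s => u s x₀) 0 (Set.Ici s) s := by
      intro s hs
      have hP0 : P (s, x₀) = 0 := by
        apply hPzero s ⟨hs.1, by linarith [hs.2]⟩ x₀
        constructor
        · linarith [hs.2, habs.1]
        · linarith [hs.2, habs.2]
      have h := (hut s x₀).hasDerivWithinAt (s := Set.Ici s)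
      rw [hP0] at h
      exact h
    have hconst := constant_of_has_deriv_right_zero hcont hderiv0 t₀
      (Set.right_mem_Icc.2 h0')
    rw [hconst]
    exact (h0 x₀ ⟨by linarith, by linarith⟩).1
  -- closure: scaling argument
  have hscale : ∀ σ ∈ Set.Ico (0:ℝ) 1, u (σ * t) (σ * x) = 0 := by
    intro σ hσ
    apply hinner
    · exact mul_nonneg hσ.1 ht0
    · have h1 : σ * t ≤ σ * R := mul_le_mul_of_nonneg_left htR hσ.1
      nlinarith [hσ.2, hR]
    · rw [abs_mul, abs_of_nonneg hσ.1]
      have h1 : σ * |x| ≤ σ * (R - t) := mul_le_mul_of_nonneg_left hx hσ.1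
      nlinarith [hσ.1, hσ.2, hR]
  have hcontσ : Continuous fun σ : ℝ => u (σ * t) (σ * x) := by
    have hc := huc.comp (show Continuous fun σ : ℝ => ((σ * t, σ * x) : ℝ × ℝ) by fun_prop)
    exact hc
  have h1 : Filter.Tendsto (fun σ : ℝ => u (σ * t) (σ * x)) (nhdsWithin 1 (Set.Iio 1))
      (nhds (u t x)) := by
    have h2 := hcontσ.tendsto 1
    simp only [one_mul] at h2
    exact h2.mono_left nhdsWithin_le_nhds
  have h2 : Filter.Tendsto (fun σ : ℝ => u (σ * t) (σ * x)) (nhdsWithin 1 (Set.Iio 1))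
      (nhds 0) := by
    apply Filter.Tendsto.congr' ?_ tendsto_const_nhds
    filter_upwards [Ioo_mem_nhdsLT_of_mem
      (show (1:ℝ) ∈ Set.Ioc 0 1 by constructor <;> norm_num)] with σ hσ
    exact (hscale σ ⟨hσ.1.le, hσ.2⟩).symm
  exact tendsto_nhds_unique h1 h2
end
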